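/- arXiv:2002.09294 — 2 statements merged into one kernel-verified Lean document; each statement's English description precedes it below -/
import Mathlib

section
/- Let X be a standard Borel space, E a countable Borel equivalence relation on X, Γ a Polish group, and ρ : E → Γ a Borel cocycle. If there is an open neighborhood U ⊆ Γ of the identity for which there is a Borel ℕ-coloring of the lacunarity digraph G^ρ_U, then for every compact set K ⊆ Γ there is a Borel ℕ-coloring of G^ρ_K. -/
open MeasureTheory Set ENNReal

namespace CocycleNadkarni

variable {X : Type*} {Γ : Type*}

/-- The `ρ`-size of `Y` relative to the point `z`: `∑_{y ∈ Y} ρ(y, z)`. -/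
noncomputable def eSize (ρ : X → X → ℝ) (Y : Set X) (z : X) : ℝ≥0∞ :=
  ∑' y : Y, ENNReal.ofReal (ρ y z)

/-- The `ρ`-size of `Y` relative to the set `Z`, computed at the point `z`. -/
noncomputable def relSize (ρ : X → X → ℝ) (Y Z : Set X) (z : X) : ℝ≥0∞ :=
  eSize ρ Y z / eSize ρ Z z

/-- Real-valued `ρ`-size (used for finite sets). -/
noncomputable def rSize (ρ : X → X → ℝ) (Y : Set X) (z : X) : ℝ :=
  ∑' y : Y, ρ y z

/-- `∫_C f dμ^ρ_S`, computed at the point `z`. -/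
noncomputable def avgOn (ρ : X → X → ℝ) (f : X → ℝ) (S C : Set X) (z : X) : ℝ :=
  (∑' y : ↥(S ∩ C), f y * ρ y z) / rSize ρ S z

/-- countable Borel equivalence relation -/
def IsCBER [MeasurableSpace X] (E : X → X → Prop) : Prop :=
  Equivalence E ∧ MeasurableSet {p : X × X | E p.1 p.2} ∧ ∀ x : X, {y | E x y}.Countable

/-- Borel cocycle `ρ : E → (0, ∞)` (as a total function whose values off `E` are irrelevant). -/
def IsCocycle [MeasurableSpace X] (E : X → X → Prop) (ρ : X → X → ℝ) : Prop :=
  Measurable (fun p : X × X => ρ p.1 p.2) ∧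
    (∀ ⦃x y : X⦄, E x y → 0 < ρ x y) ∧
    ∀ ⦃x y z : X⦄, E x y → E y z → ρ x z = ρ x y * ρ y z

/-- Borel cocycle into a group `Γ`. -/
def IsGrpCocycle [MeasurableSpace X] [Group Γ] [MeasurableSpace Γ]
    (E : X → X → Prop) (ρ : X → X → Γ) : Prop :=
  Measurable (fun p : X × X => ρ p.1 p.2) ∧
    ∀ ⦃x y z : X⦄, E x y → E y z → ρ x z = ρ x y * ρ y z

/-- finite Borel subequivalence relation of `E` -/
def IsFinSubequiv [MeasurableSpace X] (E F : X → X → Prop) : Prop :=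
  Equivalence F ∧ MeasurableSet {p : X × X | F p.1 p.2} ∧
    (∀ ⦃x y : X⦄, F x y → E x y) ∧ ∀ x : X, {y | F x y}.Finite

/-- finite Borel subequivalence relation of `E` restricted to `W` (extended by the diagonal). -/
def IsFinSubequivOn [MeasurableSpace X] (E : X → X → Prop) (W : Set X)
    (F : X → X → Prop) : Prop :=
  Equivalence F ∧ MeasurableSet {p : X × X | F p.1 p.2} ∧
    (∀ ⦃x y : X⦄, F x y → x = y ∨ (E x y ∧ x ∈ W ∧ y ∈ W)) ∧ ∀ x : X, {y | F x y}.Finite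

/-- `ρ`-invariance of a Borel measure. -/
def IsInvariant [MeasurableSpace X] (E : X → X → Prop) (ρ : X → X → ℝ)
    (μ : Measure X) : Prop :=
  ∀ T : X ≃ᵐ X, (∀ x, E (T x) x) → ∀ B : Set X, MeasurableSet B →
    μ (T '' B) = ∫⁻ x in B, ENNReal.ofReal (ρ (T x) x) ∂μ

/-- invariance w.r.t. the restriction of `ρ` to a set `R` of pairs, via Borel injections
whose graphs are contained in `R⁻¹`. -/
def IsInvariantRel [MeasurableSpace X] (R : Set (X × X)) (ρ : X → X → ℝ)
    (μ : Measure X) : Prop :=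
  ∀ (B : Set X) (T : X → X), MeasurableSet B → Measurable T → Set.InjOn T B →
    (∀ x ∈ B, ((T x, x) : X × X) ∈ R) →
    μ (T '' B) = ∫⁻ x in B, ENNReal.ofReal (ρ (T x) x) ∂μ

/-- a Borel ℕ-coloring of the lacunarity digraph `G^ρ_Z`. -/
def HasColoring [MeasurableSpace X] (E : X → X → Prop) (ρ : X → X → Γ)
    (Z : Set Γ) : Prop :=
  ∃ c : X → ℕ, Measurable c ∧
    ∀ ⦃x y : X⦄, x ≠ y → E x y → ρ x y ∈ Z → c x ≠ c y

/-- smoothness of the cocycle `ρ` restricted to `E` restricted to `W`. -/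
def SmoothOn [MeasurableSpace X] (E : X → X → Prop) (ρ : X → X → ℝ)
    (W : Set X) : Prop :=
  ∃ U : Set ℝ, IsOpen U ∧ (1:ℝ) ∈ U ∧ U ⊆ Set.Ioi 0 ∧
    ∃ c : X → ℕ, Measurable c ∧
      ∀ ⦃x y : X⦄, x ∈ W → y ∈ W → x ≠ y → E x y → ρ x y ∈ U → c x ≠ c y

/-- smoothness of the cocycle `ρ` on `E`. -/
def Smooth [MeasurableSpace X] (E : X → X → Prop) (ρ : X → X → ℝ) : Prop :=
  SmoothOn E ρ Set.univ

/-- `E`-invariance of a set. -/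
def EInvariant (E : X → X → Prop) (B : Set X) : Prop :=
  ∀ ⦃x y : X⦄, E x y → x ∈ B → y ∈ B

/-- a compression of `ρ` over the finite subequivalence relation `F` of `E`. -/
def CompressionOver [MeasurableSpace X] (E F : X → X → Prop) (ρ : X → X → ℝ)
    (φ : X → X) : Prop :=
  (∀ x, E x (φ x)) ∧
  (∀ x : X, relSize ρ (φ ⁻¹' {y | F y x}) {y | F y x} x ≤ 1) ∧
  (∀ x : X, ∃ y, E x y ∧ relSize ρ (φ ⁻¹' {z | F z y}) {z | F z y} y < 1)

/-- a compression of the quotient of `ρ | E | W` by the finite subequivalence relation given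
by the setoid `s`, expressed via representatives. -/
def QuotCompressionOn [MeasurableSpace X] (E : X → X → Prop) (ρ : X → X → ℝ)
    (W : Set X) (s : Setoid X) (φ : Quotient s → Quotient s) : Prop :=
  (∀ ⦃x : X⦄, x ∈ W → ∀ y : X, φ (Quotient.mk s x) = Quotient.mk s y → (E x y ∧ y ∈ W)) ∧
  (∀ ⦃x : X⦄, x ∈ W →
    relSize ρ {y | y ∈ W ∧ φ (Quotient.mk s y) = Quotient.mk s x} {y | s.r y x} x ≤ 1) ∧
  (∀ ⦃x : X⦄, x ∈ W → ∃ y, y ∈ W ∧ E x y ∧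
    relSize ρ {z | z ∈ W ∧ φ (Quotient.mk s z) = Quotient.mk s y} {z | s.r z y} y < 1)


/-- `B` has `ρ`-density at least `ε` relative to `W`. -/
def HasDensityAtLeastOn [MeasurableSpace X] (E : X → X → Prop) (ρ : X → X → ℝ)
    (B W : Set X) (ε : ℝ) : Prop :=
  ∃ F : X → X → Prop, IsFinSubequivOn E W F ∧
    ∀ x ∈ W, ENNReal.ofReal ε ≤ relSize ρ (B ∩ {y | F y x}) {y | F y x} x

/-- `B` has positive `ρ`-density relative to `W`. -/
def HasPosDensityOn [MeasurableSpace X] (E : X → X → Prop) (ρ : X → X → ℝ)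
    (B W : Set X) : Prop :=
  ∃ ε : ℝ, 0 < ε ∧ HasDensityAtLeastOn E ρ B W ε

/-- `B` has σ-positive `ρ`-density relative to `W`. -/
def HasSigmaPosDensityOn [MeasurableSpace X] (E : X → X → Prop) (ρ : X → X → ℝ)
    (B W : Set X) : Prop :=
  ∃ A : ℕ → Set X, (∀ n, MeasurableSet (A n)) ∧ (∀ n, A n ⊆ W) ∧
    (∀ n, ∀ x ∈ A n, ∀ y ∈ W, E x y → y ∈ A n) ∧ W = ⋃ n, A n ∧
    ∀ n, HasPosDensityOn E ρ (B ∩ A n) (A n)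

/-- Separate a point from a finite set of reals by a rational interval. -/
theorem rat_interval_sep (s : Set ℝ) (hs : s.Finite) (a : ℝ) (ha : a ∉ s) :
    ∃ q r : ℚ, a ∈ Set.Ioo (q : ℝ) r ∧ ∀ b ∈ s, b ∉ Set.Ioo (q : ℝ) r := by
  have hcl : IsClosed s := hs.isClosed
  have : sᶜ ∈ nhds a := hcl.isOpen_compl.mem_nhds ha
  obtain ⟨ε, hε, hball⟩ := Metric.mem_nhds_iff.1 this
  obtain ⟨q, hq1, hq2⟩ := exists_rat_btwn (show a - ε < a by linarith)
  obtain ⟨r, hr1, hr2⟩ := exists_rat_btwn (show a < a + ε by linarith)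
  refine ⟨q, r, ⟨hq2, hr1⟩, fun b hb hbio => ?_⟩
  have : b ∈ Metric.ball a ε := by
    rw [Real.ball_eq_Ioo]
    exact ⟨by linarith [hbio.1], by linarith [hbio.2]⟩
  exact hball this hb

set_option maxHeartbeats 1000000 in
open scoped Pointwise in
/-- If some open neighborhood `U` of the identity admits a Borel ℕ-coloring of `G^ρ_U`,
then every compact `K ⊆ Γ` admits a Borel ℕ-coloring of `G^ρ_K`. -/
theorem stmt5 [MeasurableSpace X] [StandardBorelSpace X]
    [Group Γ] [TopologicalSpace Γ] [IsTopologicalGroup Γ] [PolishSpace Γ]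
    [MeasurableSpace Γ] [BorelSpace Γ]
    (E : X → X → Prop) (hE : IsCBER E)
    (ρ : X → X → Γ) (hρ : IsGrpCocycle E ρ)
    (h : ∃ U : Set Γ, IsOpen U ∧ (1 : Γ) ∈ U ∧ HasColoring E ρ U) :
    ∀ K : Set Γ, IsCompact K → HasColoring E ρ K := by
  classical
  obtain ⟨U, hUopen, hU1, c, hc_meas, hc⟩ := h
  intro K hK
  have hEq : Equivalence E := hE.1
  have hEmeas := hE.2.1
  have hρmeas := hρ.1
  have hcoc := hρ.2
  -- a symmetric-ish open neighborhood `V` of `1` with `V⁻¹ * V ⊆ U`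
  obtain ⟨W, hWopen, hW1, hWU⟩ := exists_open_nhds_one_mul_subset (hUopen.mem_nhds hU1)
  set V : Set Γ := W ∩ W⁻¹ with hVdef
  have hVopen : IsOpen V := hWopen.inter hWopen.inv
  have hV1 : (1 : Γ) ∈ V := ⟨hW1, by simpa using hW1⟩
  have hVU : ∀ a b : Γ, a ∈ V → b ∈ V → a⁻¹ * b ∈ U := fun a b ha hb =>
    hWU (Set.mul_mem_mul (Set.mem_inv.1 ha.2) hb.1)
  -- cover `K` by finitely many translates of `V`
  obtain ⟨t, ht⟩ := hK.elim_finite_subcover (fun g : Γ => g • V)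
    (fun g => hVopen.smul g)
    (fun k hk => Set.mem_iUnion.2 ⟨k, by
      rwa [Set.mem_smul_set_iff_inv_smul_mem, smul_eq_mul, inv_mul_cancel]⟩)
  -- embed `X` into `ℝ`
  obtain ⟨f, hf⟩ := MeasureTheory.exists_measurableEmbedding_real X
  -- for each `x`, each translate `g • V` contains the `ρ(x, ·)`-value of at most one
  -- neighbor of any given color
  have unique : ∀ (g : Γ) (x y z : X), E x y → E x z → ρ x y ∈ g • V → ρ x z ∈ g • V →
      c y = c z → y = z := by
    intro g x y z hxy hxz hy hz hcyz
    by_contra hne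
    obtain ⟨a, haV, ha⟩ := hy
    obtain ⟨b, hbV, hb⟩ := hz
    have hEyz : E y z := hEq.trans (hEq.symm hxy) hxz
    have hρyz : ρ y z = a⁻¹ * b := by
      have h1 : ρ x z = ρ x y * ρ y z := hcoc hxy hEyz
      rw [← ha, ← hb] at h1
      simp only [smul_eq_mul, mul_assoc] at h1
      have h2 : b = a * ρ y z := mul_left_cancel h1
      rw [h2, ← mul_assoc, inv_mul_cancel, one_mul]
    exact hc hne hEyz (hρyz ▸ hVU a b haV hbV) hcyz
  -- the set of points having a same-colored `K`-neighbor with `f`-value in `(q, r)`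
  let Nbr : ℕ → ℚ → ℚ → Set X := fun N q r =>
    {x | ∃ y, y ≠ x ∧ E x y ∧ ρ x y ∈ K ∧ c y = N ∧ f y ∈ Set.Ioo (q : ℝ) r}
  let S : Γ → ℕ → ℚ → ℚ → Set (X × X) := fun g N q r =>
    {p | f p.2 ≠ f p.1 ∧ E p.1 p.2 ∧ ρ p.1 p.2 ∈ K ∩ g • V ∧ c p.2 = N ∧
      f p.2 ∈ Set.Ioo (q : ℝ) r}
  have hSmeas : ∀ g N q r, MeasurableSet (S g N q r) := by
    intro g N q r
    exact ((measurableSet_eq_fun (hf.measurable.comp measurable_snd)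
        (hf.measurable.comp measurable_fst)).compl).inter
      (hEmeas.inter ((hρmeas (hK.isClosed.measurableSet.inter (hVopen.smul g).measurableSet)).inter
        (((hc_meas.comp measurable_snd) (measurableSet_singleton N)).inter
          ((hf.measurable.comp measurable_snd) measurableSet_Ioo))))
  have hNbr_eq : ∀ N q r, Nbr N q r = ⋃ g ∈ t, Prod.fst '' (S g N q r) := by
    intro N q r
    ext x
    constructor
    · rintro ⟨y, hyx, hExy, hKxy, hcy, hfy⟩
      obtain ⟨g, hg, hmem⟩ := Set.mem_iUnion₂.1 (ht hKxy)
      exact Set.mem_biUnion hg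
        ⟨(x, y), ⟨fun h => hyx (hf.injective h), hExy, ⟨hKxy, hmem⟩, hcy, hfy⟩, rfl⟩
    · rintro h
      obtain ⟨g, hg, ⟨x', y⟩, hp, rfl⟩ := Set.mem_iUnion₂.1 h
      exact ⟨y, fun h => hp.1 (congrArg f h), hp.2.1, hp.2.2.1.1, hp.2.2.2⟩
  have hNbr_meas : ∀ N q r, MeasurableSet (Nbr N q r) := by
    intro N q r
    rw [hNbr_eq]
    refine MeasurableSet.biUnion t.countable_toSet (fun g _ => ?_)
    refine (hSmeas g N q r).image_of_measurable_injOn measurable_fst ?_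
    rintro ⟨x, y⟩ hp ⟨x', y'⟩ hp' (h : x = x')
    subst h
    have h2 := unique g x y y' hp.2.1 hp'.2.1 hp.2.2.1.2 hp'.2.2.1.2
      (hp.2.2.2.1.trans hp'.2.2.2.1.symm)
    rw [h2]
  -- each point has only finitely many same-colored `K`-neighbors
  have hfin : ∀ x : X, {y | y ≠ x ∧ E x y ∧ ρ x y ∈ K ∧ c y = c x}.Finite := by
    intro x
    have hsub : {y | y ≠ x ∧ E x y ∧ ρ x y ∈ K ∧ c y = c x} ⊆
        ⋃ g ∈ t, {y | E x y ∧ ρ x y ∈ g • V ∧ c y = c x} := by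
      rintro y ⟨hyx, hExy, hKxy, hcy⟩
      obtain ⟨g, hg, hmem⟩ := Set.mem_iUnion₂.1 (ht hKxy)
      exact Set.mem_biUnion hg ⟨hExy, hmem, hcy⟩
    refine Set.Finite.subset (Set.Finite.biUnion t.finite_toSet fun g _ => ?_) hsub
    apply Set.Subsingleton.finite
    rintro y ⟨hEy, hgy, hcy⟩ z ⟨hEz, hgz, hcz⟩
    exact unique g x y z hEy hEz hgy hgz (hcy.trans hcz.symm)
  -- the basic Borel independent sets
  let B : ℕ × ℚ × ℚ → Set X := fun i =>
    {y | c y = i.1 ∧ f y ∈ Set.Ioo (i.2.1 : ℝ) i.2.2} \ Nbr i.1 i.2.1 i.2.2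
  have hBmeas : ∀ i, MeasurableSet (B i) := fun i =>
    ((hc_meas (measurableSet_singleton i.1)).inter (hf.measurable measurableSet_Ioo)).diff
      (hNbr_meas _ _ _)
  have hcover : ∀ x : X, ∃ q r : ℚ, x ∈ B (c x, q, r) := by
    intro x
    have hM := hfin x
    have hfM : (f '' {y | y ≠ x ∧ E x y ∧ ρ x y ∈ K ∧ c y = c x}).Finite := hM.image f
    have hfx : f x ∉ f '' {y | y ≠ x ∧ E x y ∧ ρ x y ∈ K ∧ c y = c x} := by
      rintro ⟨y, hy, hfy⟩
      exact hy.1 (hf.injective hfy)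
    obtain ⟨q, r, hx_io, hsep⟩ := rat_interval_sep _ hfM (f x) hfx
    refine ⟨q, r, ⟨rfl, hx_io⟩, ?_⟩
    rintro ⟨y, hyx, hExy, hKxy, hcy, hfy⟩
    exact hsep (f y) ⟨y, ⟨hyx, hExy, hKxy, hcy⟩, rfl⟩ hfy
  -- reindex over `ℕ`
  let Q : ℕ → Set X := fun n => (Encodable.decode (α := ℕ × ℚ × ℚ) n).elim ∅ B
  have hQdef : ∀ n, Q n = (Encodable.decode (α := ℕ × ℚ × ℚ) n).elim ∅ B := fun _ => rfl
  have hQmeas : ∀ n, MeasurableSet (Q n) := by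
    intro n
    rw [hQdef]
    cases hdec : Encodable.decode (α := ℕ × ℚ × ℚ) n with
    | none => exact MeasurableSet.empty
    | some i => exact hBmeas i
  have hQcover : ∀ x, ∃ n, x ∈ Q n := by
    intro x
    obtain ⟨q, r, hx⟩ := hcover x
    refine ⟨Encodable.encode ((c x, q, r) : ℕ × ℚ × ℚ), ?_⟩
    rw [hQdef, Encodable.encodek]
    exact hx
  -- independence of each `Q n`
  have hQind : ∀ (n : ℕ) (x y : X), x ∈ Q n → y ∈ Q n → x ≠ y → E x y → ρ x y ∈ K →
      False := by
    intro n x y hx hy hxy hExy hKxy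
    rw [hQdef] at hx hy
    cases hdec : Encodable.decode (α := ℕ × ℚ × ℚ) n with
    | none => rw [hdec] at hx; exact hx
    | some i =>
      rw [hdec] at hx hy
      obtain ⟨⟨hcx, _⟩, hxN⟩ := hx
      obtain ⟨⟨hcy, hfy⟩, _⟩ := hy
      exact hxN ⟨y, Ne.symm hxy, hExy, hKxy, hcy, hfy⟩
  clear hQdef
  clear_value Q
  -- the final coloring
  refine ⟨fun x => sInf {m | x ∈ Q m}, ?_, ?_⟩
  · apply measurable_to_countable'
    intro n
    have hpre : (fun x : X => sInf {m | x ∈ Q m}) ⁻¹' {n} =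
        Q n ∩ ⋂ m ∈ Finset.range n, (Q m)ᶜ := by
      ext x
      simp only [Set.mem_preimage, Set.mem_singleton_iff, Set.mem_inter_iff, Set.mem_iInter,
        Finset.mem_range, Set.mem_compl_iff]
      constructor
      · rintro rfl
        exact ⟨Nat.sInf_mem (hQcover x), fun m hm => Nat.notMem_of_lt_sInf hm⟩
      · rintro ⟨hx, hlt⟩
        refine le_antisymm (Nat.sInf_le hx) ?_
        by_contra hn
        push_neg at hn
        exact hlt _ hn (Nat.sInf_mem (hQcover x))
    rw [hpre]
    exact (hQmeas n).inter (MeasurableSet.biInter (Finset.range n).countable_toSet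
      fun m _ => (hQmeas m).compl)
  · intro x y hxy hExy hKxy heq
    have heq' : sInf {m | x ∈ Q m} = sInf {m | y ∈ Q m} := heq
    have hx : x ∈ Q (sInf {m | y ∈ Q m}) := heq' ▸ Nat.sInf_mem (hQcover x)
    have hy : y ∈ Q (sInf {m | y ∈ Q m}) := Nat.sInf_mem (hQcover y)
    exact hQind _ x y hx hy hxy hExy hKxy

end CocycleNadkarni
end

section
/- Let X be a standard Borel space, E a countable Borel equivalence relation on X, ρ : E → (0,∞) a Borel cocycle, and F a finite Borel subequivalence relation of E. Then ρ is smooth if and only if the quotient cocycle ρ/F is smooth. -/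
open MeasureTheory Set ENNReal

namespace CocycleNadkarni

variable {X : Type*} {Γ : Type*}

section Machinery

open Function PolishSpace PiNat TopologicalSpace Metric Filter Topology


/-- A countable family of sets is *Borel-away* if it is contained in a family of Borel sets
with empty intersection. -/
def SepFam {α : Type*} [MeasurableSpace α] (s : ℕ → Set α) : Prop :=
  ∃ B : ℕ → Set α, (∀ n, s n ⊆ B n) ∧ (∀ n, MeasurableSet (B n)) ∧ (⋂ n, B n) = ∅

lemma SepFam.mono {α : Type*} [MeasurableSpace α] {s t : ℕ → Set α}
    (h : ∀ n, s n ⊆ t n) (ht : SepFam t) : SepFam s := by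
  obtain ⟨B, hB1, hB2, hB3⟩ := ht
  exact ⟨B, fun n => (h n).trans (hB1 n), hB2, hB3⟩

lemma sepFam_of_forall_update {α : Type*} [MeasurableSpace α] {s : ℕ → Set α} (j : ℕ)
    (t : ℕ → Set α) (hcover : s j ⊆ ⋃ i, t i)
    (h : ∀ i, SepFam (Function.update s j (t i))) : SepFam s := by
  choose B hB1 hB2 hB3 using h
  refine ⟨fun n => if n = j then ⋃ i, B i j else ⋂ i, B i n, ?_, ?_, ?_⟩
  · intro n
    by_cases hn : n = j
    · subst hn
      simp only [if_pos rfl]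
      refine hcover.trans (Set.iUnion_mono fun i => ?_)
      have := hB1 i n
      rwa [Function.update_self] at this
    · simp only [if_neg hn]
      refine Set.subset_iInter fun i => ?_
      have := hB1 i n
      rwa [Function.update_of_ne hn] at this
  · intro n
    by_cases hn : n = j
    · simp only [if_pos hn]; exact MeasurableSet.iUnion fun i => hB2 i j
    · simp only [if_neg hn]; exact MeasurableSet.iInter fun i => hB2 i n
  · ext x
    simp only [Set.mem_iInter, Set.mem_empty_iff_false, iff_false]
    intro hx
    have hxj := hx j
    rw [if_pos rfl] at hxj
    obtain ⟨i, hi⟩ := Set.mem_iUnion.1 hxj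
    have : x ∈ ⋂ n, B i n := by
      refine Set.mem_iInter.2 fun n => ?_
      by_cases hn : n = j
      · subst hn; exact hi
      · have := hx n
        rw [if_neg hn] at this
        exact Set.mem_iInter.1 this i
    rw [hB3 i] at this
    exact this

/-- **Novikov's separation theorem** (countable form): countably many analytic sets with empty
intersection are contained in Borel sets with empty intersection. -/
theorem analyticSet_iInter_empty_separation {α : Type*} [TopologicalSpace α] [T2Space α]
    [MeasurableSpace α] [OpensMeasurableSpace α] {A : ℕ → Set α}
    (hA : ∀ n, AnalyticSet (A n)) (hemp : (⋂ n, A n) = ∅) :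
    ∃ B : ℕ → Set α, (∀ n, A n ⊆ B n) ∧ (∀ n, MeasurableSet (B n)) ∧ (⋂ n, B n) = ∅ := by
  by_cases hne : ∀ n, (A n).Nonempty
  swap
  · push_neg at hne
    obtain ⟨n₀, hn₀⟩ := hne
    refine ⟨fun n => if n = n₀ then ∅ else Set.univ, fun n => ?_, fun n => ?_, ?_⟩
    · by_cases hn : n = n₀
      · subst hn; simp [hn₀]
      · simp [hn]
    · by_cases hn : n = n₀ <;> simp [hn]
    · have : (⋂ n, if n = n₀ then (∅ : Set α) else Set.univ) ⊆ ∅ := by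
        refine Set.iInter_subset_of_subset n₀ ?_
        simp
      exact this.antisymm (Set.empty_subset _)
  -- all the `A n` are nonempty, hence ranges of continuous maps from `ℕ → ℕ`
  have hf : ∀ n, ∃ f : (ℕ → ℕ) → α, Continuous f ∧ Set.range f = A n := by
    intro n
    have h := hA n
    rw [AnalyticSet] at h
    rcases h with h | ⟨f, hf, hfr⟩
    · exact absurd (hne n) (by simp [h])
    · exact ⟨f, hf, hfr⟩
  choose f hfc hfr using hf
  by_contra hsep
  have hsep' : ¬ SepFam (fun n => Set.range (f n)) := by
    intro ⟨B, h1, h2, h3⟩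
    exact hsep ⟨B, fun n => (hfr n) ▸ h1 n, h2, h3⟩
  -- the state machine: cylinders of given lengths whose images are not Borel-away
  let fam : (ℕ → (ℕ → ℕ)) × (ℕ → ℕ) → ℕ → Set α := fun p n => f n '' cylinder (p.1 n) (p.2 n)
  let St := {p : (ℕ → (ℕ → ℕ)) × (ℕ → ℕ) // ¬ SepFam (fam p)}
  have step : ∀ (p : St) (j : ℕ), ∃ q : St,
      ((q : St).1.2 = Function.update (p : St).1.2 j ((p : St).1.2 j + 1)) ∧
      (∀ n, n ≠ j → (q : St).1.1 n = (p : St).1.1 n) ∧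
      ((q : St).1.1 j ∈ cylinder ((p : St).1.1 j) ((p : St).1.2 j)) := by
    rintro ⟨⟨x, l⟩, hp⟩ j
    have key : ∃ i : ℕ, ¬ SepFam (Function.update (fam (x, l)) j
        (f j '' cylinder (Function.update (x j) (l j) i) (l j + 1))) := by
      by_contra hall
      push_neg at hall
      apply hp
      refine sepFam_of_forall_update j
        (fun i => f j '' cylinder (Function.update (x j) (l j) i) (l j + 1)) ?_ hall
      show f j '' cylinder (x j) (l j) ⊆ _
      rw [← iUnion_cylinder_update (x j) (l j), Set.image_iUnion]
    obtain ⟨i, hi⟩ := key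
    refine ⟨⟨⟨Function.update x j (Function.update (x j) (l j) i),
        Function.update l j (l j + 1)⟩, ?_⟩, rfl, ?_, ?_⟩
    · have hfameq : fam (Function.update x j (Function.update (x j) (l j) i),
          Function.update l j (l j + 1)) =
          Function.update (fam (x, l)) j
            (f j '' cylinder (Function.update (x j) (l j) i) (l j + 1)) := by
        funext n
        by_cases hn : n = j
        · subst hn; simp [fam, Function.update_self]
        · simp [fam, Function.update_of_ne hn]
      rw [hfameq]
      exact hi
    · intro n hn
      simp [Function.update_of_ne hn]
    · simp only [Function.update_self]
      exact update_mem_cylinder _ _ _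
  choose st hst1 hst2 hst3 using step
  have hp0 : ¬ SepFam (fam ⟨fun _ _ => 0, fun _ => 0⟩) := by
    have : fam ⟨fun _ _ => 0, fun _ => 0⟩ = fun n => Set.range (f n) := by
      funext n
      simp [fam, cylinder_zero, Set.image_univ]
    rw [this]
    exact hsep'
  let p : ℕ → St := fun t => Nat.rec ⟨⟨fun _ _ => 0, fun _ => 0⟩, hp0⟩
    (fun t pt => st pt (Nat.unpair t).1) t
  have hpsucc : ∀ t, p (t + 1) = st (p t) (Nat.unpair t).1 := fun t => rfl
  let len : ℕ → ℕ → ℕ := fun t n => (p t : St).1.2 n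
  let base : ℕ → ℕ → (ℕ → ℕ) := fun t n => (p t : St).1.1 n
  have hlen_succ : ∀ t n, len (t + 1) n =
      if n = (Nat.unpair t).1 then len t n + 1 else len t n := by
    intro t n
    have := hst1 (p t) (Nat.unpair t).1
    rw [← hpsucc t] at this
    by_cases hn : n = (Nat.unpair t).1
    · rw [if_pos hn, show len (t+1) n = (p (t+1) : St).1.2 n from rfl, this, hn,
        Function.update_self]
    · simp only [if_neg hn]
      rw [show len (t+1) n = (p (t+1) : St).1.2 n from rfl, this, Function.update_of_ne hn]
  have hlen_mono : ∀ n, Monotone (fun t => len t n) := by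
    intro n
    apply monotone_nat_of_le_succ
    intro t
    rw [hlen_succ t n]
    split <;> omega
  have hbase_succ : ∀ t n, (n ≠ (Nat.unpair t).1 → base (t + 1) n = base t n) ∧
      base (t + 1) n ∈ cylinder (base t n) (len t n) := by
    intro t n
    constructor
    · intro hn
      have := hst2 (p t) (Nat.unpair t).1 n hn
      rw [← hpsucc t] at this
      exact this
    · by_cases hn : n = (Nat.unpair t).1
      · have h3 := hst3 (p t) (Nat.unpair t).1
        rw [← hpsucc t] at h3
        rw [hn]
        exact h3
      · have := hst2 (p t) (Nat.unpair t).1 n hn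
        rw [← hpsucc t] at this
        rw [show base (t+1) n = (p (t+1) : St).1.1 n from rfl, this]
        exact self_mem_cylinder _ _
  have stab : ∀ n m t, m < len t n → ∀ t', t ≤ t' → base t' n m = base t n m := by
    intro n m t hm t' htt'
    induction t', htt' using Nat.le_induction with
    | base => rfl
    | succ u hu IH =>
      have hmu : m < len u n := lt_of_lt_of_le hm (hlen_mono n hu)
      have hcy := (hbase_succ u n).2
      rw [mem_cylinder_iff] at hcy
      rw [hcy m hmu, IH]
  have len_unbounded : ∀ n m, ∃ t, m < len t n := by
    intro n m
    have grow : ∀ k, ∃ t, k ≤ len t n := by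
      intro k
      induction k with
      | zero => exact ⟨0, Nat.zero_le _⟩
      | succ k IH =>
        obtain ⟨t, ht⟩ := IH
        refine ⟨Nat.pair n t + 1, ?_⟩
        have h1 : t ≤ Nat.pair n t := Nat.right_le_pair n t
        have h2 : len t n ≤ len (Nat.pair n t) n := hlen_mono n h1
        have h3 : len (Nat.pair n t + 1) n = len (Nat.pair n t) n + 1 := by
          rw [hlen_succ, if_pos]
          simp [Nat.unpair_pair]
        omega
    obtain ⟨t, ht⟩ := grow (m + 1)
    exact ⟨t, ht⟩
  let y : ℕ → ℕ → ℕ := fun n m => base (Nat.find (len_unbounded n m)) n m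
  have hy : ∀ t n m, m < len t n → base t n m = y n m := by
    intro t n m hm
    have h0 := Nat.find_spec (len_unbounded n m)
    rcases le_total t (Nat.find (len_unbounded n m)) with h | h
    · exact (stab n m t hm _ h).symm
    · exact stab n m _ h0 t h
  have hcyl : ∀ t n, f n '' cylinder (base t n) (len t n) = f n '' cylinder (y n) (len t n) := by
    intro t n
    have hmem : y n ∈ cylinder (base t n) (len t n) := by
      rw [mem_cylinder_iff]
      intro i hi
      exact (hy t n i hi).symm
    rw [mem_cylinder_iff_eq.1 hmem]
  have hz : ∀ a b, f a (y a) = f b (y b) := by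
    by_contra hne2
    push_neg at hne2
    obtain ⟨a, b, hab⟩ := hne2
    have haneb : a ≠ b := fun h => hab (by rw [h])
    obtain ⟨u, v, u_open, v_open, hu, hv, huv⟩ := t2_separation hab
    letI : MetricSpace (ℕ → ℕ) := metricSpaceNatNat
    obtain ⟨εa, εapos, hεa⟩ : ∃ ε > 0, Metric.ball (y a) ε ⊆ f a ⁻¹' u :=
      Metric.mem_nhds_iff.1 ((hfc a).continuousAt.preimage_mem_nhds (u_open.mem_nhds hu))
    obtain ⟨εb, εbpos, hεb⟩ : ∃ ε > 0, Metric.ball (y b) ε ⊆ f b ⁻¹' v :=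
      Metric.mem_nhds_iff.1 ((hfc b).continuousAt.preimage_mem_nhds (v_open.mem_nhds hv))
    obtain ⟨K, hK⟩ : ∃ K : ℕ, (1 / 2 : ℝ) ^ K < min εa εb :=
      exists_pow_lt_of_lt_one (lt_min εapos εbpos) (by norm_num)
    obtain ⟨ta, hta⟩ := len_unbounded a K
    obtain ⟨tb, htb⟩ := len_unbounded b K
    have hlena : K < len (max ta tb) a := lt_of_lt_of_le hta (hlen_mono a (le_max_left _ _))
    have hlenb : K < len (max ta tb) b := lt_of_lt_of_le htb (hlen_mono b (le_max_right _ _))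
    set t := max ta tb
    apply (p t).2
    refine ⟨fun k => if k = a then u else if k = b then v else Set.univ, ?_, ?_, ?_⟩
    · intro k
      show f k '' cylinder (base t k) (len t k) ⊆ if k = a then u else if k = b then v else Set.univ
      by_cases hka : k = a
      · rw [if_pos hka, hka]
        show f a '' cylinder (base t a) (len t a) ⊆ u
        rw [hcyl t a]
        rintro - ⟨z, hzc, rfl⟩
        apply hεa
        rw [mem_cylinder_iff_dist_le] at hzc
        have h1 : ((1 : ℝ) / 2) ^ len t a ≤ (1 / 2 : ℝ) ^ K :=
          pow_le_pow_of_le_one (by norm_num) (by norm_num) hlena.le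
        exact lt_of_le_of_lt (hzc.trans h1) (hK.trans_le (min_le_left _ _))
      · by_cases hkb : k = b
        · rw [if_neg hka, if_pos hkb, hkb]
          show f b '' cylinder (base t b) (len t b) ⊆ v
          rw [hcyl t b]
          rintro - ⟨z, hzc, rfl⟩
          apply hεb
          rw [mem_cylinder_iff_dist_le] at hzc
          have h1 : ((1 : ℝ) / 2) ^ len t b ≤ (1 / 2 : ℝ) ^ K :=
            pow_le_pow_of_le_one (by norm_num) (by norm_num) hlenb.le
          exact lt_of_le_of_lt (hzc.trans h1) (hK.trans_le (min_le_right _ _))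
        · rw [if_neg hka, if_neg hkb]
          exact Set.subset_univ _
    · intro k
      show MeasurableSet (if k = a then u else if k = b then v else Set.univ)
      by_cases hka : k = a
      · rw [if_pos hka]
        exact u_open.measurableSet
      · by_cases hkb : k = b
        · rw [if_neg hka, if_pos hkb]
          exact v_open.measurableSet
        · rw [if_neg hka, if_neg hkb]
          exact MeasurableSet.univ
    · ext w
      simp only [Set.mem_iInter, Set.mem_empty_iff_false, iff_false]
      intro hw
      have hwa : w ∈ (if a = a then u else if a = b then v else Set.univ) := hw a
      rw [if_pos rfl] at hwa
      have hwb : w ∈ (if b = a then u else if b = b then v else Set.univ) := hw b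
      rw [if_neg (Ne.symm haneb), if_pos rfl] at hwb
      exact Set.disjoint_iff.1 huv ⟨hwa, hwb⟩
  have : f 0 (y 0) ∈ ⋂ n, A n := by
    refine Set.mem_iInter.2 fun n => ?_
    rw [← hfr n]
    exact ⟨y n, (hz n 0).symm ▸ rfl⟩
  rw [hemp] at this
  exact this

section Enumeration

variable {X : Type*} [MeasurableSpace X] [StandardBorelSpace X]

lemma measurable_nat_glue {β : Type*} [MeasurableSpace β] {idx : X → ℕ} (hidx : Measurable idx)
    {g : ℕ → X → β} (hg : ∀ m, Measurable (g m)) : Measurable fun x => g (idx x) x := by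
  intro T hT
  have hset : (fun x => g (idx x) x) ⁻¹' T = ⋃ m, idx ⁻¹' {m} ∩ g m ⁻¹' T := by
    ext x
    simp only [Set.mem_preimage, Set.mem_iUnion, Set.mem_inter_iff, Set.mem_singleton_iff]
    constructor
    · intro hx
      exact ⟨idx x, rfl, hx⟩
    · rintro ⟨m, hm, hx⟩
      rw [hm]
      exact hx
  rw [hset]
  exact MeasurableSet.iUnion fun m => (hidx (measurableSet_singleton m)).inter (hg m hT)

/-- Measurable enumeration of the classes of a finite Borel equivalence relation on a
standard Borel space. -/
theorem exists_class_enum {F : X → X → Prop} (hFe : Equivalence F)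
    (hFm : MeasurableSet {p : X × X | F p.1 p.2})
    (hFfin : ∀ x : X, {y | F y x}.Finite) :
    ∃ (N : X → ℕ) (h : ℕ → X → X), Measurable N ∧ (∀ i, Measurable (h i)) ∧
      (∀ x, 0 < N x) ∧ (∀ x, ∀ i, i < N x → F (h i x) x) ∧
      (∀ x y, F y x → ∃ i, i < N x ∧ h i x = y) ∧
      (∀ x, Set.InjOn (fun i => h i x) (Set.Iio (N x))) ∧
      (∀ x y, F x y → N x = N y ∧ ∀ i, i < N x → h i x = h i y) := by
  classical
  obtain ⟨e, he⟩ := MeasureTheory.exists_measurableEmbedding_real X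
  set cls : X → Set X := fun x => {y | F y x} with hcls
  have hxcls : ∀ x, x ∈ cls x := fun x => hFe.refl x
  have hclseq : ∀ x y, F x y → cls x = cls y := by
    intro x y hxy
    ext z
    exact ⟨fun hz => hFe.trans hz hxy, fun hz => hFe.trans hz (hFe.symm hxy)⟩
  set sfin : X → Finset ℝ := fun x => (hFfin x).toFinset.image e with hsfin
  have hcard : ∀ x, (sfin x).card = (cls x).ncard := by
    intro x
    rw [hsfin]
    simp only
    rw [Finset.card_image_of_injective _ he.injective]
    exact (Set.ncard_eq_toFinset_card _ (hFfin x)).symm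
  have hmem_sfin : ∀ x y, F y x → e y ∈ sfin x := by
    intro x y hy
    rw [hsfin]
    simp only [Finset.mem_image, Set.Finite.mem_toFinset]
    exact ⟨y, hy, rfl⟩
  have tuple_of_le : ∀ (m : ℕ) (x : X), m ≤ (cls x).ncard →
      ∃ v : Fin m → X, (∀ i, F (v i) x) ∧ StrictMono fun i => e (v i) := by
    intro m x hm
    obtain ⟨t, hts, htc⟩ := Finset.exists_subset_card_eq (hm.trans_eq (hcard x).symm)
    have hmem : ∀ r ∈ t, ∃ z, F z x ∧ e z = r := by
      intro r hr
      have h1 := hts hr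
      rw [hsfin] at h1
      simp only [Finset.mem_image, Set.Finite.mem_toFinset] at h1
      obtain ⟨z, hz1, hz2⟩ := h1
      exact ⟨z, hz1, hz2⟩
    choose w hw1 hw2 using hmem
    refine ⟨fun i => w (t.orderEmbOfFin htc i) (Finset.orderEmbOfFin_mem t htc i),
      fun i => hw1 _ _, ?_⟩
    intro i j hij
    have h2 := (t.orderEmbOfFin htc).strictMono hij
    show e (w ((t.orderEmbOfFin htc) i) (Finset.orderEmbOfFin_mem t htc i)) <
      e (w ((t.orderEmbOfFin htc) j) (Finset.orderEmbOfFin_mem t htc j))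
    rw [hw2, hw2]
    exact h2
  have le_of_tuple : ∀ (m : ℕ) (x : X) (v : Fin m → X), (∀ i, F (v i) x) →
      (StrictMono fun i => e (v i)) → m ≤ (cls x).ncard := by
    intro m x v hv hmono
    rw [← hcard x]
    have hsub : (Finset.image (fun i => e (v i)) Finset.univ : Finset ℝ) ⊆ sfin x := by
      intro r hr
      simp only [Finset.mem_image, Finset.mem_univ, true_and] at hr
      obtain ⟨i, rfl⟩ := hr
      exact hmem_sfin x (v i) (hv i)
    have hc := Finset.card_le_card hsub
    rwa [Finset.card_image_of_injective _ hmono.injective, Finset.card_univ,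
      Fintype.card_fin] at hc
  have hncard_pos : ∀ x, 0 < (cls x).ncard := fun x =>
    (Set.ncard_pos (hFfin x)).2 ⟨x, hxcls x⟩
  set tup : ∀ _ : ℕ, Set ((Fin _ → X) × X) := fun m =>
    {p : (Fin m → X) × X | (∀ i, F (p.1 i) p.2) ∧
      ∀ i j : Fin m, i < j → e (p.1 i) < e (p.1 j)} with htup
  have htupm : ∀ m, MeasurableSet (tup m) := by
    intro m
    rw [htup]
    simp only
    rw [Set.setOf_and]
    apply MeasurableSet.inter
    · rw [Set.setOf_forall]
      refine MeasurableSet.iInter fun i => ?_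
      have hmeas : Measurable fun p : (Fin m → X) × X => (p.1 i, p.2) :=
        ((measurable_pi_apply i).comp measurable_fst).prodMk measurable_snd
      exact hmeas hFm
    · rw [Set.setOf_forall]
      refine MeasurableSet.iInter fun i => ?_
      rw [Set.setOf_forall]
      refine MeasurableSet.iInter fun j => ?_
      by_cases hij : i < j
      · simp only [hij, true_implies]
        exact measurableSet_lt
          (he.measurable.comp ((measurable_pi_apply i).comp measurable_fst))
          (he.measurable.comp ((measurable_pi_apply j).comp measurable_fst))
      · simp only [hij, false_implies, Set.setOf_true]
        exact MeasurableSet.univ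
  set V : ℕ → Set X := fun m => Prod.snd '' tup m with hV
  have hVsub : ∀ m x, x ∈ V m ↔ m ≤ (cls x).ncard := by
    intro m x
    constructor
    · rintro ⟨⟨v, x'⟩, hv, rfl⟩
      exact le_of_tuple m _ v hv.1 fun i j hij => hv.2 i j hij
    · intro hm
      obtain ⟨v, hv1, hv2⟩ := tuple_of_le m x hm
      exact ⟨(v, x), ⟨hv1, fun i j hij => hv2 hij⟩, rfl⟩
  letI := upgradeStandardBorel X
  have hVana : ∀ m, AnalyticSet (V m) := fun m =>
    (htupm m).analyticSet_image measurable_snd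
  have hVempty : (⋂ m, V m) = ∅ := by
    ext x
    simp only [Set.mem_iInter, Set.mem_empty_iff_false, iff_false]
    intro hx
    have h2 := (hVsub ((cls x).ncard + 1) x).1 (hx _)
    omega
  obtain ⟨B, hB1, hB2, hB3⟩ := analyticSet_iInter_empty_separation hVana hVempty
  set W : ℕ → Set X := fun m => (B m)ᶜ with hW
  have hWm : ∀ m, MeasurableSet (W m) := fun m => (hB2 m).compl
  have hWcard : ∀ m x, x ∈ W m → (cls x).ncard ≤ m := by
    intro m x hx
    by_contra hc
    push_neg at hc
    exact hx (hB1 m ((hVsub m x).2 hc.le))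
  have hWcov : ∀ x, ∃ m, x ∈ W m := by
    intro x
    by_contra hc
    push_neg at hc
    have hmem : x ∈ ⋂ m, B m := Set.mem_iInter.2 fun m => not_not.1 (hc m)
    rw [hB3] at hmem
    exact hmem
  -- bounded case, by induction on the bound
  have bounded : ∀ (m : ℕ) (Wb : Set X), MeasurableSet Wb → (∀ x ∈ Wb, (cls x).ncard ≤ m) →
      ∃ (N : X → ℕ) (h : ℕ → X → X), Measurable N ∧ (∀ i, Measurable (h i)) ∧
        ∀ x ∈ Wb, N x = (cls x).ncard ∧ (∀ i, i < N x → F (h i x) x) ∧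
          (∀ i j, i < j → j < N x → e (h i x) < e (h j x)) ∧
          ∀ y, F y x → ∃ i, i < N x ∧ h i x = y := by
    intro m
    induction m with
    | zero =>
      intro Wb _ hbound
      refine ⟨fun _ => 0, fun _ x => x, measurable_const, fun _ => measurable_id, ?_⟩
      intro x hx
      exact absurd (hbound x hx) (by have := hncard_pos x; omega)
    | succ m IH =>
      intro Wb hWbm hbound
      set D : Set ((Fin (m+1) → X) × X) := tup (m+1) ∩ (Set.univ ×ˢ Wb) with hD
      have hDm : MeasurableSet D := (htupm (m+1)).inter (MeasurableSet.univ.prod hWbm)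
      have hDcard : ∀ p ∈ D, (sfin p.2).card = m + 1 := by
        rintro ⟨v, x⟩ ⟨hv, -, hx⟩
        have h1 : m + 1 ≤ (cls x).ncard := le_of_tuple _ _ v hv.1 fun i j hij => hv.2 i j hij
        have h2 := hbound x hx
        show (sfin x).card = m + 1
        rw [hcard]
        omega
      have hDenum : ∀ p (hp : p ∈ D) (i : Fin (m+1)),
          e (p.1 i) = (sfin p.2).orderEmbOfFin (hDcard p hp) i := by
        intro p hp i
        have h1 := Finset.orderEmbOfFin_unique (hDcard p hp)
          (f := fun i : Fin (m+1) => e (p.1 i)) (fun i => hmem_sfin p.2 (p.1 i) (hp.1.1 i))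
          (fun a b hab => hp.1.2 a b hab)
        exact congrFun h1 i
      have hinj : Set.InjOn Prod.snd D := by
        rintro ⟨vp, xp⟩ hp ⟨vq, xq⟩ hq (hpq : xp = xq)
        subst hpq
        have h1 : ∀ i, e (vp i) = e (vq i) := by
          intro i
          rw [hDenum _ hp i, hDenum _ hq i]
        have h2 : vp = vq := funext fun i => he.injective (h1 i)
        rw [h2]
      set A : Set X := Prod.snd '' D with hA
      have hAm : MeasurableSet A := hDm.image_of_measurable_injOn measurable_snd hinj
      have hAcard : ∀ x ∈ A, (cls x).ncard = m + 1 := by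
        rintro - ⟨p, hp, rfl⟩
        have h1 := hDcard p hp
        rw [hcard] at h1
        exact h1
      have hAof : ∀ x ∈ Wb, (cls x).ncard = m + 1 → x ∈ A := by
        intro x hx hcx
        obtain ⟨v, hv1, hv2⟩ := tuple_of_le (m+1) x (le_of_eq hcx.symm)
        exact ⟨(v, x), ⟨⟨hv1, fun i j hij => hv2 hij⟩, ⟨trivial, hx⟩⟩, rfl⟩
      set vf : X → (Fin (m+1) → X) := fun x =>
        if hx : ∃ p, p ∈ D ∧ Prod.snd p = x then (Classical.choose hx).1
        else fun _ => x with hvf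
      have hvf_spec : ∀ x ∈ A, (vf x, x) ∈ D := by
        intro x hx
        have hex : ∃ p, p ∈ D ∧ Prod.snd p = x := by
          rcases hx with ⟨p, hp, rfl⟩
          exact ⟨p, hp, rfl⟩
        obtain ⟨hp1, hp2⟩ := Classical.choose_spec hex
        have heq : ((Classical.choose hex).1, x) = Classical.choose hex := Prod.ext rfl hp2.symm
        rw [hvf]
        simp only [dif_pos hex]
        rw [heq]
        exact hp1
      have hvfm : Measurable vf := by
        intro T hT
        have himg : MeasurableSet (Prod.snd '' (D ∩ Prod.fst ⁻¹' T)) :=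
          (hDm.inter (measurable_fst hT)).image_of_measurable_injOn measurable_snd
            (hinj.mono Set.inter_subset_left)
        have hconstm : Measurable fun x : X => (fun _ : Fin (m+1) => x) :=
          measurable_pi_lambda _ fun _ => measurable_id
        have hconst : MeasurableSet {x : X | (fun _ : Fin (m+1) => x) ∈ T} := hconstm hT
        have hset : vf ⁻¹' T =
            (Prod.snd '' (D ∩ Prod.fst ⁻¹' T)) ∪ ({x | (fun _ : Fin (m+1) => x) ∈ T} \ A) := by
          ext x
          constructor
          · intro hx
            by_cases hxA : x ∈ A
            · exact Or.inl ⟨(vf x, x), ⟨hvf_spec x hxA, hx⟩, rfl⟩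
            · refine Or.inr ⟨?_, hxA⟩
              have hex : ¬ ∃ p, p ∈ D ∧ Prod.snd p = x := by
                rintro ⟨p, hp, hpx⟩
                exact hxA ⟨p, hp, hpx⟩
              rw [Set.mem_preimage, hvf] at hx
              simp only [dif_neg hex] at hx
              exact hx
          · rintro (⟨p, ⟨hpD, hpT⟩, rfl⟩ | ⟨hxT, hxA⟩)
            · have hA' : p.2 ∈ A := ⟨p, hpD, rfl⟩
              have h1 := hvf_spec p.2 hA'
              have h2 : (vf p.2, p.2) = p := hinj h1 hpD rfl
              show vf p.2 ∈ T
              rw [show vf p.2 = p.1 from congrArg Prod.fst h2]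
              exact hpT
            · show vf x ∈ T
              have hex : ¬ ∃ p, p ∈ D ∧ Prod.snd p = x := by
                rintro ⟨p, hp, hpx⟩
                exact hxA ⟨p, hp, hpx⟩
              rw [hvf]
              simp only [dif_neg hex]
              exact hxT
        rw [hset]
        exact himg.union (hconst.diff hAm)
      have hbound' : ∀ x ∈ Wb \ A, (cls x).ncard ≤ m := by
        intro x hx
        have h1 := hbound x hx.1
        by_contra hc
        push_neg at hc
        exact hx.2 (hAof x hx.1 (by omega))
      obtain ⟨N', h', hN'm, hh'm, hIH⟩ := IH (Wb \ A) (hWbm.diff hAm) hbound'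
      refine ⟨A.piecewise (fun _ => m + 1) N',
        fun i => A.piecewise (fun x => if hi : i < m + 1 then vf x ⟨i, hi⟩ else x) (h' i),
        Measurable.piecewise hAm measurable_const hN'm, ?_, ?_⟩
      · intro i
        refine Measurable.piecewise hAm ?_ (hh'm i)
        by_cases hi : i < m + 1
        · simp only [dif_pos hi]
          exact (measurable_pi_apply _).comp hvfm
        · simp only [dif_neg hi]
          exact measurable_id
      · intro x hx
        by_cases hxA : x ∈ A
        · have hvfs := hvf_spec x hxA
          have hNx : A.piecewise (fun _ => m + 1) N' x = m + 1 :=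
            Set.piecewise_eq_of_mem _ _ _ hxA
          have hhx : ∀ (i : ℕ) (hi : i < m + 1),
              A.piecewise (fun x => if hi : i < m + 1 then vf x ⟨i, hi⟩ else x) (h' i) x
                = vf x ⟨i, hi⟩ := by
            intro i hi
            rw [Set.piecewise_eq_of_mem _ _ _ hxA]
            simp only [dif_pos hi]
          have hrange : Set.range (vf x) = cls x := by
            apply Set.eq_of_subset_of_ncard_le
            · rintro - ⟨i, rfl⟩
              exact hvfs.1.1 i
            · have hinjvf : Function.Injective (vf x) := by
                intro a b hab
                by_contra hne
                rcases lt_or_gt_of_ne hne with h1 | h1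
                · exact absurd (congrArg e hab) (ne_of_lt (hvfs.1.2 a b h1))
                · exact absurd (congrArg e hab).symm (ne_of_lt (hvfs.1.2 b a h1))
              have h2 : (Set.range (vf x)).ncard = m + 1 := by
                rw [← Set.image_univ, Set.ncard_image_of_injOn hinjvf.injOn,
                  Set.ncard_univ, Nat.card_eq_fintype_card, Fintype.card_fin]
              rw [h2, hAcard x hxA]
            · exact hFfin x
          refine ⟨by rw [hNx, hAcard x hxA], ?_, ?_, ?_⟩
          · intro i hi
            rw [hNx] at hi
            beta_reduce
            rw [hhx i hi]
            exact hvfs.1.1 ⟨i, hi⟩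
          · intro i j hij hj
            rw [hNx] at hj
            beta_reduce
            rw [hhx i (lt_trans hij hj), hhx j hj]
            exact hvfs.1.2 ⟨i, lt_trans hij hj⟩ ⟨j, hj⟩ hij
          · intro y hy
            have hy' : y ∈ Set.range (vf x) := hrange.symm ▸ hy
            obtain ⟨i, rfl⟩ := hy'
            refine ⟨i.1, by rw [hNx]; exact i.2, ?_⟩
            beta_reduce
            rw [hhx i.1 i.2]
        · have hx' : x ∈ Wb \ A := ⟨hx, hxA⟩
          have hNx : A.piecewise (fun _ => m + 1) N' x = N' x :=
            Set.piecewise_eq_of_notMem _ _ _ hxA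
          have hhx : ∀ i : ℕ,
              A.piecewise (fun x => if hi : i < m + 1 then vf x ⟨i, hi⟩ else x) (h' i) x
                = h' i x := fun i => Set.piecewise_eq_of_notMem _ _ _ hxA
          obtain ⟨hI1, hI2, hI3, hI4⟩ := hIH x hx'
          refine ⟨by rw [hNx, hI1], ?_, ?_, ?_⟩
          · intro i hi
            rw [hNx] at hi
            beta_reduce
            rw [hhx i]
            exact hI2 i hi
          · intro i j hij hj
            rw [hNx] at hj
            beta_reduce
            rw [hhx i, hhx j]
            exact hI3 i j hij hj
          · intro y hy
            obtain ⟨i, hi1, hi2⟩ := hI4 y hy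
            exact ⟨i, by rw [hNx]; exact hi1, by beta_reduce; rw [hhx i]; exact hi2⟩
  -- globalize
  choose Nm hmf hNmm hhmm hspec using fun m => bounded m (W m) (hWm m) (hWcard m)
  have hidx : Measurable fun x => Nat.find (hWcov x) :=
    measurable_find hWcov fun k => hWm k
  set N : X → ℕ := fun x => Nm (Nat.find (hWcov x)) x with hN
  set h : ℕ → X → X := fun i x => hmf (Nat.find (hWcov x)) i x with hh
  have hNmeas : Measurable N := measurable_nat_glue hidx hNmm
  have hhmeas : ∀ i, Measurable (h i) := fun i => measurable_nat_glue hidx fun m => hhmm m i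
  have hspec' : ∀ x, N x = (cls x).ncard ∧ (∀ i, i < N x → F (h i x) x) ∧
      (∀ i j, i < j → j < N x → e (h i x) < e (h j x)) ∧
      ∀ y, F y x → ∃ i, i < N x ∧ h i x = y :=
    fun x => hspec (Nat.find (hWcov x)) x (Nat.find_spec (hWcov x))
  have key : ∀ (z : X) (k : ℕ) (hNz : N z = k) (hk : (sfin z).card = k) (i : ℕ) (hi : i < k),
      e (h i z) = (sfin z).orderEmbOfFin hk ⟨i, hi⟩ := by
    intro z k hNz hk i hi
    have h1 := Finset.orderEmbOfFin_unique hk (f := fun j : Fin k => e (h (j : ℕ) z))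
      (fun j => hmem_sfin z _ ((hspec' z).2.1 j (by rw [hNz]; exact j.2)))
      (fun a b hab => (hspec' z).2.2.1 a b hab (by rw [hNz]; exact b.2))
    exact congrFun h1 ⟨i, hi⟩
  refine ⟨N, h, hNmeas, hhmeas, ?_, ?_, ?_, ?_, ?_⟩
  · intro x
    rw [(hspec' x).1]
    exact hncard_pos x
  · exact fun x => (hspec' x).2.1
  · exact fun x y hy => (hspec' x).2.2.2 y hy
  · intro x i hi j hj hij
    by_contra hne
    rcases lt_or_gt_of_ne hne with h1 | h1
    · exact absurd (congrArg e hij) (ne_of_lt ((hspec' x).2.2.1 i j h1 hj))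
    · exact absurd (congrArg e hij).symm (ne_of_lt ((hspec' x).2.2.1 j i h1 hi))
  · intro x y hxy
    have hclseq' := hclseq x y hxy
    have hNxy : N x = N y := by
      rw [(hspec' x).1, (hspec' y).1, hclseq']
    have hsfineq : sfin x = sfin y := by
      rw [hsfin]
      simp only
      congr 1
      apply Finset.ext
      intro z
      simp only [Set.Finite.mem_toFinset]
      constructor
      · intro hz
        have : z ∈ cls x := hz
        rw [hclseq'] at this
        exact this
      · intro hz
        have : z ∈ cls y := hz
        rw [← hclseq'] at this
        exact this
    refine ⟨hNxy, ?_⟩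
    intro i hi
    have hcx : (sfin x).card = N x := by rw [hcard, (hspec' x).1]
    have h2 := Finset.orderEmbOfFin_unique hcx (f := fun j : Fin (N x) => e (h (j : ℕ) y))
      (fun j => by
        have hmem := (hspec' y).2.1 j (by rw [← hNxy]; exact j.2)
        exact hmem_sfin x _ (hFe.trans hmem (hFe.symm hxy)))
      (fun a b hab => (hspec' y).2.2.1 a b hab (by rw [← hNxy]; exact b.2))
    apply he.injective
    rw [key x (N x) rfl hcx i hi]
    exact (congrFun h2 ⟨i, hi⟩).symm

end Enumeration


lemma exists_q {U : Set ℝ} (hUopen : IsOpen U) (hU1 : (1:ℝ) ∈ U) :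
    ∃ q : ℝ, 1 < q ∧ ∀ a b : ℝ, a ∈ Set.Ioo q⁻¹ q → b ∈ Set.Ioo q⁻¹ q → a * b ∈ U := by
  obtain ⟨ε, hε, hball⟩ := Metric.isOpen_iff.1 hUopen 1 hU1
  set t := min (ε / 2) 1 with htdef
  have ht0 : 0 < t := lt_min (by linarith) one_pos
  have ht1 : t ≤ 1 := min_le_right _ _
  have htε : t < ε := lt_of_le_of_lt (min_le_left _ _) (by linarith)
  have hsub : Set.Ioo (1 - t) (1 + t) ⊆ U := by
    intro r hr
    apply hball
    rw [Real.ball_eq_Ioo]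
    exact ⟨by have := hr.1; linarith, by have := hr.2; linarith⟩
  refine ⟨1 + t / 8, by linarith, ?_⟩
  rintro a b ⟨ha1, ha2⟩ ⟨hb1, hb2⟩
  set q := 1 + t / 8 with hqdef
  have hq0 : 0 < q := by rw [hqdef]; linarith
  have hqi : q⁻¹ * q = 1 := inv_mul_cancel₀ (ne_of_gt hq0)
  have ha0 : 0 < a := lt_trans (inv_pos.2 hq0) ha1
  have hb0 : 0 < b := lt_trans (inv_pos.2 hq0) hb1
  have h1 : 1 < a * q := by
    have h := mul_lt_mul_of_pos_right ha1 hq0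
    rwa [hqi] at h
  have h2 : 1 < b * q := by
    have h := mul_lt_mul_of_pos_right hb1 hq0
    rwa [hqi] at h
  apply hsub
  constructor
  · have h3 : (1 - t) * (q * q) < 1 := by
      rw [hqdef]
      nlinarith [mul_pos ht0 ht0, mul_pos (mul_pos ht0 ht0) ht0]
    have h4 : 1 < (a * b) * (q * q) := by nlinarith
    have h5 : (1 - t) * (q * q) < (a * b) * (q * q) := by linarith
    exact lt_of_mul_lt_mul_right h5 (by positivity)
  · have h6 : a * b < q * q := by nlinarith
    have h7 : q * q < 1 + t := by rw [hqdef]; nlinarith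
    linarith

lemma floor_ratio {q S T : ℝ} (hq : 1 < q) (hS : 1 ≤ S) (hT : 1 ≤ T)
    (hfl : ⌊Real.log S / Real.log q⌋ = ⌊Real.log T / Real.log q⌋) :
    S / T ∈ Set.Ioo q⁻¹ q := by
  have hq0 : 0 < q := by linarith
  have hL : 0 < Real.log q := Real.log_pos hq
  have hS0 : 0 < S := by linarith
  have hT0 : 0 < T := by linarith
  have h1 : Real.log S / Real.log q < ⌊Real.log T / Real.log q⌋ + 1 := by
    rw [← hfl]; exact Int.lt_floor_add_one _
  have h2 : (⌊Real.log T / Real.log q⌋ : ℝ) ≤ Real.log T / Real.log q := Int.floor_le _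
  have h3 : Real.log T / Real.log q < ⌊Real.log S / Real.log q⌋ + 1 := by
    rw [hfl]; exact Int.lt_floor_add_one _
  have h4 : (⌊Real.log S / Real.log q⌋ : ℝ) ≤ Real.log S / Real.log q := Int.floor_le _
  have h5 : Real.log S - Real.log T < Real.log q := by
    have h5' : (Real.log S - Real.log T) / Real.log q < 1 := by
      rw [sub_div]; linarith
    exact (div_lt_one hL).1 h5'
  have h6 : Real.log T - Real.log S < Real.log q := by
    have h6' : (Real.log T - Real.log S) / Real.log q < 1 := by
      rw [sub_div]; linarith
    exact (div_lt_one hL).1 h6'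
  have hexp : S / T = Real.exp (Real.log S - Real.log T) := by
    rw [Real.exp_sub, Real.exp_log hS0, Real.exp_log hT0]
  constructor
  · rw [hexp, show q⁻¹ = Real.exp (-Real.log q) by rw [Real.exp_neg, Real.exp_log hq0]]
    exact Real.exp_lt_exp.2 (by linarith)
  · rw [hexp]
    calc Real.exp (Real.log S - Real.log T) < Real.exp (Real.log q) := Real.exp_lt_exp.2 h5
    _ = q := Real.exp_log hq0

end Machinery

/-- `ρ` is smooth iff the quotient cocycle `ρ / F` is smooth, for any finite Borel
subequivalence relation `F` of `E`. -/
theorem stmt11 [MeasurableSpace X] [StandardBorelSpace X]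
    (E : X → X → Prop) (hE : IsCBER E)
    (ρ : X → X → ℝ) (hρ : IsCocycle E ρ)
    (F : X → X → Prop) (hF : Equivalence F) (hFsub : IsFinSubequiv E F) :
    Smooth E ρ ↔
      (∃ U : Set ℝ, IsOpen U ∧ (1 : ℝ) ∈ U ∧ U ⊆ Set.Ioi 0 ∧
        ∃ c : Quotient (Setoid.mk F hF) → ℕ, Measurable c ∧
          ∀ x y : X, ¬ F x y → E x y →
            rSize ρ {z | F z x} y / rSize ρ {z | F z y} y ∈ U →
            c (Quotient.mk (Setoid.mk F hF) x) ≠ c (Quotient.mk (Setoid.mk F hF) y)) := by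
  classical
  obtain ⟨hEeq, hEmeas, hEcnt⟩ := hE
  obtain ⟨hρmeas, hρpos, hρmul⟩ := hρ
  obtain ⟨-, hFmeas, hFsubE, hFfin0⟩ := hFsub
  have hFfin : ∀ x : X, {y | F y x}.Finite := by
    intro x
    apply (hFfin0 x).subset
    intro y hy
    exact hF.symm hy
  obtain ⟨N, h, hNmeas, hhmeas, hNpos, hmem, hsurj, hinj, hinv⟩ :=
    exists_class_enum hF hFmeas hFfin
  obtain ⟨e', he'⟩ := MeasureTheory.exists_measurableEmbedding_real X
  have hρ1 : ∀ x, ρ x x = 1 := by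
    intro x
    have h1 := hρmul (hEeq.refl x) (hEeq.refl x)
    have h2 := hρpos (hEeq.refl x)
    nlinarith
  have hmemE : ∀ x i, i < N x → E (h i x) x := fun x i hi => hFsubE (hmem x i hi)
  set S : X → ℝ := fun x => ∑ i ∈ Finset.range (N x), ρ (h i x) x with hSdef
  set T : X → ℝ := fun x => ∑ i ∈ Finset.range (N x), ρ (h i x) (h 0 x) with hTdef
  have hSmeas : Measurable S := by
    have hk : ∀ k : ℕ, Measurable fun x => ∑ i ∈ Finset.range k, ρ (h i x) x := fun k =>
      Finset.measurable_sum _ fun i _ => hρmeas.comp ((hhmeas i).prodMk measurable_id)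
    exact measurable_nat_glue hNmeas hk
  have hTmeas : Measurable T := by
    have hk : ∀ k : ℕ, Measurable fun x => ∑ i ∈ Finset.range k, ρ (h i x) (h 0 x) := fun k =>
      Finset.measurable_sum _ fun i _ => hρmeas.comp ((hhmeas i).prodMk (hhmeas 0))
    exact measurable_nat_glue hNmeas hk
  have hterm_pos : ∀ x y i, E x y → i < N x → 0 < ρ (h i x) y := fun x y i hxy hi =>
    hρpos (hEeq.trans (hmemE x i hi) hxy)
  have hdex : ∀ x : X, ∃ i, i < N x ∧ h i x = x := fun x => hsurj x x (hF.refl x)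
  have hS1 : ∀ x, 1 ≤ S x := by
    intro x
    obtain ⟨i, hi, hix⟩ := hdex x
    have h1 : ρ (h i x) x = 1 := by rw [hix, hρ1]
    show (1:ℝ) ≤ ∑ i ∈ Finset.range (N x), ρ (h i x) x
    calc (1:ℝ) = ρ (h i x) x := h1.symm
    _ ≤ ∑ i ∈ Finset.range (N x), ρ (h i x) x :=
      Finset.single_le_sum
        (fun j hj => (hterm_pos x x j (hEeq.refl x) (Finset.mem_range.1 hj)).le)
        (Finset.mem_range.2 hi)
  have hT1 : ∀ x, 1 ≤ T x := by
    intro x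
    have h1 : ρ (h 0 x) (h 0 x) = 1 := hρ1 _
    show (1:ℝ) ≤ ∑ i ∈ Finset.range (N x), ρ (h i x) (h 0 x)
    calc (1:ℝ) = ρ (h 0 x) (h 0 x) := h1.symm
    _ ≤ ∑ i ∈ Finset.range (N x), ρ (h i x) (h 0 x) :=
      Finset.single_le_sum
        (fun j hj => (hρpos (hEeq.trans (hmemE x j (Finset.mem_range.1 hj))
          (hEeq.symm (hmemE x 0 (hNpos x))))).le)
        (Finset.mem_range.2 (hNpos x))
  have hS0 : ∀ x, (0:ℝ) < S x := fun x => lt_of_lt_of_le one_pos (hS1 x)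
  have hT0 : ∀ x, (0:ℝ) < T x := fun x => lt_of_lt_of_le one_pos (hT1 x)
  have htsum : ∀ (x : X) (f : X → ℝ),
      (∑' y : ({z | F z x} : Set X), f y) = ∑ i ∈ Finset.range (N x), f (h i x) := by
    intro x f
    have hfin := hFfin x
    rw [tsum_subtype]
    rw [tsum_eq_sum (s := hfin.toFinset)
      (fun b hb => Set.indicator_of_notMem (by simpa using hb) f)]
    have h1 : ∑ b ∈ hfin.toFinset, Set.indicator {z | F z x} f b
        = ∑ b ∈ hfin.toFinset, f b :=
      Finset.sum_congr rfl fun b hb => Set.indicator_of_mem (by simpa using hb) f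
    rw [h1]
    have h2 : hfin.toFinset = (Finset.range (N x)).image fun i => h i x := by
      apply Finset.ext
      intro b
      simp only [Set.Finite.mem_toFinset, Finset.mem_image, Finset.mem_range]
      constructor
      · intro hb
        obtain ⟨i, hi1, hi2⟩ := hsurj x b hb
        exact ⟨i, hi1, hi2⟩
      · rintro ⟨i, hi, rfl⟩
        exact hmem x i hi
    rw [h2, Finset.sum_image]
    intro i hi j hj hij
    exact hinj x (Set.mem_Iio.2 (Finset.mem_range.1 hi)) (Set.mem_Iio.2 (Finset.mem_range.1 hj))
      hij
  have hnum : ∀ x y, E x y → ∀ w, E w x →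
      (∑ i ∈ Finset.range (N x), ρ (h i x) y)
        = (∑ i ∈ Finset.range (N x), ρ (h i x) w) * ρ w y := by
    intro x y hxy w hwx
    rw [Finset.sum_mul]
    refine Finset.sum_congr rfl fun i hi => ?_
    exact hρmul (hEeq.trans (hmemE x i (Finset.mem_range.1 hi)) (hEeq.symm hwx))
      (hEeq.trans hwx hxy)
  have hratio : ∀ x y, E x y →
      rSize ρ {z | F z x} y / rSize ρ {z | F z y} y = (S x * ρ x y) / S y := by
    intro x y hxy
    have h1 : rSize ρ {z | F z x} y = S x * ρ x y :=
      (htsum x fun w => ρ w y).trans (hnum x y hxy x (hEeq.refl x))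
    have h2 : rSize ρ {z | F z y} y = S y := htsum y fun w => ρ w y
    rw [h1, h2]
  have hratioT : ∀ x y, E x y →
      rSize ρ {z | F z x} y / rSize ρ {z | F z y} y
        = (T x * (ρ (h 0 x) (h 0 y) * ρ (h 0 y) y)) / (T y * ρ (h 0 y) y) := by
    intro x y hxy
    have h1 : rSize ρ {z | F z x} y = T x * ρ (h 0 x) y :=
      (htsum x fun w => ρ w y).trans (hnum x y hxy (h 0 x) (hmemE x 0 (hNpos x)))
    have h1' : ρ (h 0 x) y = ρ (h 0 x) (h 0 y) * ρ (h 0 y) y :=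
      hρmul (hEeq.trans (hmemE x 0 (hNpos x)) (hEeq.trans hxy (hEeq.symm (hmemE y 0 (hNpos y)))))
        (hmemE y 0 (hNpos y))
    have h2 : rSize ρ {z | F z y} y = T y * ρ (h 0 y) y :=
      (htsum y fun w => ρ w y).trans (hnum y y (hEeq.refl y) (h 0 y) (hmemE y 0 (hNpos y)))
    rw [h1, h1', h2]
  have hmk : Measurable (Quotient.mk (Setoid.mk F hF)) := fun _ hs => hs
  constructor
  · -- forward direction
    rintro ⟨U, hUopen, hU1, hUpos, c, hcmeas, hcprop⟩
    obtain ⟨q, hq, hprod⟩ := exists_q hUopen hU1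
    have hq0 : (0:ℝ) < q := lt_trans one_pos hq
    have hqinv1 : q⁻¹ < 1 := by
      have hqi : q⁻¹ * q = 1 := inv_mul_cancel₀ (ne_of_gt hq0)
      nlinarith [inv_pos.2 hq0]
    set kT : X → ℕ := fun x => (⌊Real.log (T x) / Real.log q⌋).toNat with hkTdef
    have hkTmeas : Measurable kT :=
      (measurable_of_countable Int.toNat).comp
        (((Real.measurable_log.comp hTmeas).div_const _).floor)
    have hkTeq : ∀ x y, kT x = kT y → T x / T y ∈ Set.Ioo q⁻¹ q := by
      intro x y hxy
      apply floor_ratio hq (hT1 x) (hT1 y)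
      have h1 : (0:ℤ) ≤ ⌊Real.log (T x) / Real.log q⌋ :=
        Int.floor_nonneg.2 (div_nonneg (Real.log_nonneg (hT1 x)) (Real.log_pos hq).le)
      have h2 : (0:ℤ) ≤ ⌊Real.log (T y) / Real.log q⌋ :=
        Int.floor_nonneg.2 (div_nonneg (Real.log_nonneg (hT1 y)) (Real.log_pos hq).le)
      have h3 : (⌊Real.log (T x) / Real.log q⌋).toNat = (⌊Real.log (T y) / Real.log q⌋).toNat :=
        hxy
      omega
    set g : X → ℕ := fun x => Nat.pair (c (h 0 x)) (Nat.pair (N x) (kT x)) with hgdef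
    have hgmeas : Measurable g := by
      have houter : Measurable fun p : ℕ × ℕ × ℕ => Nat.pair p.1 (Nat.pair p.2.1 p.2.2) :=
        measurable_of_countable _
      exact houter.comp ((hcmeas.comp (hhmeas 0)).prodMk (hNmeas.prodMk hkTmeas))
    have hginv : ∀ a b, F a b → g a = g b := by
      intro a b hab
      obtain ⟨hN, hh⟩ := hinv a b hab
      have hT' : T a = T b := by
        show (∑ i ∈ Finset.range (N a), ρ (h i a) (h 0 a))
          = ∑ i ∈ Finset.range (N b), ρ (h i b) (h 0 b)
        rw [← hN]
        refine Finset.sum_congr rfl fun i hi => ?_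
        rw [hh i (Finset.mem_range.1 hi), hh 0 (hNpos a)]
      show Nat.pair (c (h 0 a)) (Nat.pair (N a) (kT a))
        = Nat.pair (c (h 0 b)) (Nat.pair (N b) (kT b))
      rw [hh 0 (hNpos a), hN, show kT a = kT b from by
        show (⌊Real.log (T a) / Real.log q⌋).toNat = (⌊Real.log (T b) / Real.log q⌋).toNat
        rw [hT']]
    refine ⟨Set.Ioo q⁻¹ q, isOpen_Ioo, ⟨hqinv1, hq⟩, fun r hr => lt_trans (inv_pos.2 hq0) hr.1,
      Quotient.lift g (fun a b hab => hginv a b hab), fun _ ht => hgmeas ht, ?_⟩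
    intro x y hnF hExy hrU
    show g x ≠ g y
    intro hgxy
    obtain ⟨hc0, hrest⟩ := Nat.pair_eq_pair.1 hgxy
    obtain ⟨hNxy, hkT⟩ := Nat.pair_eq_pair.1 hrest
    have hTT : T y / T x ∈ Set.Ioo q⁻¹ q := hkTeq y x hkT.symm
    have hρ0y : 0 < ρ (h 0 y) y := hρpos (hmemE y 0 (hNpos y))
    have hρσ : ρ (h 0 x) (h 0 y)
        = (rSize ρ {z | F z x} y / rSize ρ {z | F z y} y) * (T y / T x) := by
      rw [hratioT x y hExy]
      field_simp [(hT0 x).ne', (hT0 y).ne', hρ0y.ne']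
    have hρσU : ρ (h 0 x) (h 0 y) ∈ U := by
      rw [hρσ]
      exact hprod _ _ hrU hTT
    have hσne : h 0 x ≠ h 0 y := by
      intro heq
      apply hnF
      exact hF.trans (hF.symm (hmem x 0 (hNpos x))) (heq ▸ hmem y 0 (hNpos y))
    have hEσ : E (h 0 x) (h 0 y) :=
      hEeq.trans (hmemE x 0 (hNpos x)) (hEeq.trans hExy (hEeq.symm (hmemE y 0 (hNpos y))))
    exact hcprop (Set.mem_univ _) (Set.mem_univ _) hσne hEσ hρσU hc0
  · -- backward direction
    rintro ⟨U, hUopen, hU1, hUpos, cbar, hcbarmeas, hprop⟩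
    obtain ⟨q, hq, hprod⟩ := exists_q hUopen hU1
    have hq0 : (0:ℝ) < q := lt_trans one_pos hq
    have hqinv1 : q⁻¹ < 1 := by
      have hqi : q⁻¹ * q = 1 := inv_mul_cancel₀ (ne_of_gt hq0)
      nlinarith [inv_pos.2 hq0]
    set f : X → ℕ := fun x => cbar (Quotient.mk (Setoid.mk F hF) x) with hfdef
    have hfmeas : Measurable f := hcbarmeas.comp hmk
    set d : X → ℕ := fun x => Nat.find (hdex x) with hddef
    have hdmeas : Measurable d := by
      apply measurable_find
      intro k
      show MeasurableSet ({x : X | k < N x} ∩ {x | h k x = x})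
      apply MeasurableSet.inter
      · exact hNmeas measurableSet_Ioi
      · have heq : {x : X | h k x = x} = {x | e' (h k x) = e' x} := by
          ext x
          simp only [Set.mem_setOf_eq]
          exact ⟨fun hx => by rw [hx], fun hx => he'.injective hx⟩
        rw [heq]
        exact measurableSet_eq_fun (he'.measurable.comp (hhmeas k)) he'.measurable
    set kS : X → ℕ := fun x => (⌊Real.log (S x) / Real.log q⌋).toNat with hkSdef
    have hkSmeas : Measurable kS :=
      (measurable_of_countable Int.toNat).comp
        (((Real.measurable_log.comp hSmeas).div_const _).floor)
    have hkSeq : ∀ x y, kS x = kS y → S x / S y ∈ Set.Ioo q⁻¹ q := by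
      intro x y hxy
      apply floor_ratio hq (hS1 x) (hS1 y)
      have h1 : (0:ℤ) ≤ ⌊Real.log (S x) / Real.log q⌋ :=
        Int.floor_nonneg.2 (div_nonneg (Real.log_nonneg (hS1 x)) (Real.log_pos hq).le)
      have h2 : (0:ℤ) ≤ ⌊Real.log (S y) / Real.log q⌋ :=
        Int.floor_nonneg.2 (div_nonneg (Real.log_nonneg (hS1 y)) (Real.log_pos hq).le)
      have h3 : (⌊Real.log (S x) / Real.log q⌋).toNat = (⌊Real.log (S y) / Real.log q⌋).toNat :=
        hxy
      omega
    refine ⟨Set.Ioo q⁻¹ q, isOpen_Ioo, ⟨hqinv1, hq⟩, fun r hr => lt_trans (inv_pos.2 hq0) hr.1,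
      fun x => Nat.pair (f x) (Nat.pair (d x) (kS x)), ?_, ?_⟩
    · have houter : Measurable fun p : ℕ × ℕ × ℕ => Nat.pair p.1 (Nat.pair p.2.1 p.2.2) :=
        measurable_of_countable _
      exact houter.comp (hfmeas.prodMk (hdmeas.prodMk hkSmeas))
    · rintro x y - - hxyne hExy hρU hcxy
      obtain ⟨hfxy, hrest⟩ := Nat.pair_eq_pair.1 hcxy
      obtain ⟨hdxy, hkxy⟩ := Nat.pair_eq_pair.1 hrest
      by_cases hFxy : F x y
      · obtain ⟨hNxy, hh⟩ := hinv x y hFxy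
        have h1 : h (d x) x = x := (Nat.find_spec (hdex x)).2
        have h2 : h (d y) y = y := (Nat.find_spec (hdex y)).2
        have h3 : d x < N x := (Nat.find_spec (hdex x)).1
        apply hxyne
        calc x = h (d x) x := h1.symm
        _ = h (d x) y := hh (d x) h3
        _ = h (d y) y := by rw [show d x = d y from hdxy]
        _ = y := h2
      · have hSr : S x / S y ∈ Set.Ioo q⁻¹ q := hkSeq x y hkxy
        have hUmem : rSize ρ {z | F z x} y / rSize ρ {z | F z y} y ∈ U := by
          rw [hratio x y hExy]
          rw [show S x * ρ x y / S y = ρ x y * (S x / S y) from by ring]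
          exact hprod _ _ hρU hSr
        exact hprop x y hFxy hExy hUmem hfxy


end CocycleNadkarni
end
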